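/- Let n ≥ 1 be an integer, b > 0 a real, and x_1,…,x_n > 0 pairwise distinct reals. Then ∫_{(0,∞)^n} det[e^{−y_j/x_k}]_{j,k=1}^n · det[y_j^{(k−1)/2} I_{k−1}(2b y_j^{1/2})]_{j,k=1}^n dy_1⋯dy_n = n! · b^{n(n−1)/2} · (∏_{k=1}^n x_k e^{b² x_k}) · Δ_n(x). -/

import Mathlib

open MeasureTheory Real Set Filter
open scoped ENNReal NNReal

/-- The modified Bessel function of the first kind of integer order `k`,
`I_k(z) = ∑_{m=0}^∞ (z/2)^(2m+k)/(m!(m+k)!)`. -/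
noncomputable def besselI (k : ℕ) (z : ℝ) : ℝ :=
  ∑' m : ℕ, (z / 2) ^ (2 * m + k) / ((Nat.factorial m : ℝ) * (Nat.factorial (m + k) : ℝ))

lemma integrableOn_pow_mul_exp_neg_div {x : ℝ} (hx : 0 < x) (p : ℕ) :
    IntegrableOn (fun y : ℝ => y ^ p * Real.exp (-(y / x))) (Ioi 0) := by
  have h := integrableOn_rpow_mul_exp_neg_mul_rpow (p := 1) (s := (p : ℝ)) (b := 1 / x)
    (lt_of_lt_of_le neg_one_lt_zero (Nat.cast_nonneg p)) one_pos (by positivity)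
  refine h.congr_fun (fun y hy => ?_) measurableSet_Ioi
  dsimp only; rw [Real.rpow_one, Real.rpow_natCast, show -(1 / x) * y = -(y / x) by ring]

lemma integral_pow_mul_exp_neg_div {x : ℝ} (hx : 0 < x) (p : ℕ) :
    ∫ y in Ioi (0:ℝ), y ^ p * Real.exp (-(y / x)) = p.factorial * x ^ (p + 1) := by
  calc ∫ y in Ioi (0:ℝ), y ^ p * Real.exp (-(y / x))
      = ∫ t in Ioi (0:ℝ), t ^ ((p : ℝ) + 1 - 1) * Real.exp (-(1 / x * t)) := by
        refine (setIntegral_congr_fun measurableSet_Ioi (fun t ht => ?_)).symm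
        rw [show (p : ℝ) + 1 - 1 = (p : ℝ) by ring, Real.rpow_natCast,
          show -(1 / x * t) = -(t / x) by ring]
    _ = (1 / (1 / x)) ^ ((p : ℝ) + 1) * Real.Gamma ((p : ℝ) + 1) :=
        Real.integral_rpow_mul_exp_neg_mul_Ioi (by positivity) (by positivity)
    _ = p.factorial * x ^ (p + 1) := by
        rw [one_div_one_div, Real.Gamma_nat_eq_factorial,
          show ((p : ℝ) + 1) = ((p + 1 : ℕ) : ℝ) by push_cast; ring, Real.rpow_natCast]
        ring


lemma besselI_series (b : ℝ) (k : ℕ) {y : ℝ} (hy : 0 ≤ y) :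
    Real.sqrt y ^ k * besselI k (2 * b * Real.sqrt y)
      = ∑' m : ℕ, b ^ (2 * m + k) / (m.factorial * (m + k).factorial) * y ^ (m + k) := by
  rw [besselI, ← tsum_mul_left]
  refine tsum_congr fun m => ?_
  have h2 : 2 * b * Real.sqrt y / 2 = b * Real.sqrt y := by ring
  have h3 : Real.sqrt y ^ k * Real.sqrt y ^ (2 * m + k) = y ^ (m + k) := by
    rw [← pow_add, show k + (2 * m + k) = 2 * (m + k) by ring, pow_mul, Real.sq_sqrt hy]
  rw [h2, mul_pow, ← h3]
  ring

lemma besselI_integral {b x : ℝ} (hb : 0 < b) (hx : 0 < x) (k : ℕ) :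
    IntegrableOn
        (fun t : ℝ => Real.exp (-(t / x)) * (Real.sqrt t ^ k * besselI k (2 * b * Real.sqrt t)))
        (Ioi 0) ∧
      ∫ t in Ioi (0:ℝ), Real.exp (-(t / x)) * (Real.sqrt t ^ k * besselI k (2 * b * Real.sqrt t))
        = b ^ k * (x ^ (k + 1) * Real.exp (b ^ 2 * x)) := by
  set μ := volume.restrict (Ioi (0:ℝ)) with hμ
  set C : ℕ → ℝ := fun m => b ^ (2 * m + k) / (m.factorial * (m + k).factorial) with hC
  set F : ℕ → ℝ → ℝ := fun m t => C m * (t ^ (m + k) * Real.exp (-(t / x))) with hF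
  have hCpos : ∀ m, 0 < C m := fun m => by
    rw [hC]; dsimp only; positivity
  have hFcont : ∀ m, Continuous (F m) := fun m => by
    rw [hF]; dsimp only; fun_prop
  have hnorm : ∀ t : ℝ, ∀ m, ‖F m t‖ ≤
      (Real.exp (-(t / x)) * (b ^ k * |t| ^ k)) * ((b ^ 2 * |t|) ^ m / m.factorial) := by
    intro t m
    have h1 : ‖F m t‖ = C m * (|t| ^ (m + k) * Real.exp (-(t / x))) := by
      rw [hF]; dsimp only
      rw [Real.norm_eq_abs, abs_mul, abs_of_pos (hCpos m), abs_mul, abs_pow,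
        abs_of_pos (Real.exp_pos _)]
    rw [h1]
    have h2 : C m ≤ b ^ (2 * m + k) / m.factorial := by
      rw [hC]; dsimp only
      apply div_le_div_of_nonneg_left (by positivity) (by positivity)
      exact le_mul_of_one_le_right (by positivity) (Nat.one_le_cast.mpr (m + k).factorial_pos)
    calc C m * (|t| ^ (m + k) * Real.exp (-(t / x)))
        ≤ b ^ (2 * m + k) / m.factorial * (|t| ^ (m + k) * Real.exp (-(t / x))) :=
          mul_le_mul_of_nonneg_right h2 (by positivity)
      _ = (Real.exp (-(t / x)) * (b ^ k * |t| ^ k)) * ((b ^ 2 * |t|) ^ m / m.factorial) := by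
          rw [pow_add b (2 * m) k, pow_mul b 2 m, pow_add |t| m k, mul_pow (b ^ 2) |t| m]
          ring
  have hsummable_norm : ∀ t : ℝ, Summable fun m => ‖F m t‖ := by
    intro t
    exact Summable.of_nonneg_of_le (fun m => norm_nonneg _) (hnorm t)
      ((Real.summable_pow_div_factorial (b ^ 2 * |t|)).mul_left _)
  have hsum : ∀ t : ℝ, Summable fun m => F m t := fun t => (hsummable_norm t).of_norm
  set G : ℝ → ℝ := fun t => ∑' m, F m t with hG
  have hGsm : StronglyMeasurable G := by
    apply stronglyMeasurable_of_tendsto (f := fun N t => ∑ m ∈ Finset.range N, F m t) atTop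
    · exact fun N => (continuous_finset_sum _ fun m _ => hFcont m).stronglyMeasurable
    · rw [tendsto_pi_nhds]
      exact fun t => (hsum t).hasSum.tendsto_sum_nat
  have hFi : ∀ m, Integrable (F m) μ := fun m =>
    ((integrableOn_pow_mul_exp_neg_div hx (m + k)).const_mul (C m) : _)
  have hFint : ∀ m, ∫ t, F m t ∂μ = C m * ((m + k).factorial * x ^ (m + k + 1)) := fun m => by
    rw [hμ, hF]; dsimp only
    rw [integral_const_mul, integral_pow_mul_exp_neg_div hx (m + k)]
  have hterm : ∀ m, C m * (((m + k).factorial : ℝ) * x ^ (m + k + 1))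
      = (b ^ k * x ^ (k + 1)) * ((b ^ 2 * x) ^ m / m.factorial) := by
    intro m
    have hm : ((m.factorial : ℝ)) ≠ 0 := by positivity
    have hmk : (((m + k).factorial : ℝ)) ≠ 0 := by positivity
    rw [hC]; dsimp only
    field_simp
    ring
  have hFnormint : ∀ m, ∫ t, ‖F m t‖ ∂μ = C m * ((m + k).factorial * x ^ (m + k + 1)) := fun m => by
    rw [← hFint m]
    refine integral_congr_ae ?_
    filter_upwards [ae_restrict_mem measurableSet_Ioi] with t ht
    exact Real.norm_of_nonneg
      (mul_nonneg (hCpos m).le (mul_nonneg (pow_nonneg ht.le _) (Real.exp_pos _).le))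
  have hFs : Summable fun m => ∫ t, ‖F m t‖ ∂μ := by
    simp_rw [hFnormint, hterm]
    exact (Real.summable_pow_div_factorial (b ^ 2 * x)).mul_left _
  have hG_int : Integrable G μ := by
    refine ⟨hGsm.aestronglyMeasurable, ?_⟩
    have h1 : ∀ t, (‖G t‖₊ : ℝ≥0∞) ≤ ∑' m, (‖F m t‖₊ : ℝ≥0∞) := by
      intro t
      have hs : Summable fun m => ‖F m t‖₊ := by
        rw [← NNReal.summable_coe]
        simpa [coe_nnnorm] using hsummable_norm t
      calc (‖G t‖₊ : ℝ≥0∞) ≤ ((∑' m, ‖F m t‖₊ : ℝ≥0) : ℝ≥0∞) :=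
            ENNReal.coe_le_coe.2 (nnnorm_tsum_le hs)
        _ = ∑' m, (‖F m t‖₊ : ℝ≥0∞) := ENNReal.coe_tsum hs
    have h2 : ∫⁻ t, (‖G t‖₊ : ℝ≥0∞) ∂μ < ⊤ := by
      calc ∫⁻ t, (‖G t‖₊ : ℝ≥0∞) ∂μ
          ≤ ∫⁻ t, ∑' m, (‖F m t‖₊ : ℝ≥0∞) ∂μ := lintegral_mono h1
        _ = ∑' m, ∫⁻ t, (‖F m t‖₊ : ℝ≥0∞) ∂μ :=
            lintegral_tsum fun m => ((hFcont m).measurable.nnnorm.coe_nnreal_ennreal).aemeasurable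
        _ = ∑' m, ENNReal.ofReal (∫ t, ‖F m t‖ ∂μ) :=
            tsum_congr fun m => (ofReal_integral_norm_eq_lintegral_enorm (hFi m)).symm
        _ = ENNReal.ofReal (∑' m, ∫ t, ‖F m t‖ ∂μ) :=
            (ENNReal.ofReal_tsum_of_nonneg (fun m => integral_nonneg fun t => norm_nonneg _)
              hFs).symm
        _ < ⊤ := ENNReal.ofReal_lt_top
    exact h2
  have hae : (fun t => Real.exp (-(t / x)) * (Real.sqrt t ^ k * besselI k (2 * b * Real.sqrt t)))
      =ᵐ[μ] G := by
    filter_upwards [ae_restrict_mem measurableSet_Ioi] with t ht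
    rw [besselI_series b k ht.le, hG]
    dsimp only
    rw [← tsum_mul_left]
    refine tsum_congr fun m => ?_
    rw [hF, hC]; dsimp only; ring
  constructor
  · exact hG_int.congr hae.symm
  · calc ∫ t in Ioi (0:ℝ), Real.exp (-(t / x)) * (Real.sqrt t ^ k * besselI k (2 * b * Real.sqrt t))
        = ∫ t, G t ∂μ := integral_congr_ae hae
      _ = ∑' m, ∫ t, F m t ∂μ := (integral_tsum_of_summable_integral_norm hFi hFs).symm
      _ = ∑' m, (b ^ k * x ^ (k + 1)) * ((b ^ 2 * x) ^ m / m.factorial) :=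
          tsum_congr fun m => (hFint m).trans (hterm m)
      _ = (b ^ k * x ^ (k + 1)) * ∑' m, ((b ^ 2 * x) ^ m / m.factorial) := tsum_mul_left
      _ = b ^ k * (x ^ (k + 1) * Real.exp (b ^ 2 * x)) := by
          rw [Real.exp_eq_exp_ℝ, NormedSpace.exp_eq_tsum_div]
          ring

lemma det_expand {n : ℕ} (f : Fin n → ℝ → ℝ) (y : Fin n → ℝ) :
    (Matrix.of fun j k => f k (y j)).det
      = ∑ σ : Equiv.Perm (Fin n), ((Equiv.Perm.sign σ : ℤ) : ℝ) * ∏ j, f (σ j) (y j) := by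
  rw [← Matrix.det_transpose, Matrix.det_apply']
  rfl

lemma perm_pair_sum {n : ℕ} (M : Matrix (Fin n) (Fin n) ℝ) :
    (∑ p : Equiv.Perm (Fin n) × Equiv.Perm (Fin n),
        ((Equiv.Perm.sign p.1 : ℤ) : ℝ) * ((Equiv.Perm.sign p.2 : ℤ) : ℝ)
          * ∏ j, M (p.1 j) (p.2 j))
      = n.factorial * M.det := by
  rw [← Finset.univ_product_univ, Finset.sum_product]
  have hdet : ∑ ρ : Equiv.Perm (Fin n), ((Equiv.Perm.sign ρ : ℤ) : ℝ) * ∏ i, M i (ρ i)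
      = M.det := by
    rw [← Matrix.det_transpose M, Matrix.det_apply']
    rfl
  have inner : ∀ σ : Equiv.Perm (Fin n),
      ∑ τ : Equiv.Perm (Fin n), ((Equiv.Perm.sign σ : ℤ) : ℝ) * ((Equiv.Perm.sign τ : ℤ) : ℝ)
        * ∏ j, M (σ j) (τ j) = M.det := by
    intro σ
    rw [← Equiv.sum_comp (Equiv.mulRight σ)
      (fun τ => ((Equiv.Perm.sign σ : ℤ) : ℝ) * ((Equiv.Perm.sign τ : ℤ) : ℝ)
        * ∏ j, M (σ j) (τ j)), ← hdet]
    refine Finset.sum_congr rfl fun ρ _ => ?_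
    have h1 : ∏ j, M (σ j) ((Equiv.mulRight σ ρ) j) = ∏ i, M i (ρ i) := by
      simp only [Equiv.coe_mulRight, Equiv.Perm.mul_apply]
      exact Equiv.prod_comp σ (fun i => M i (ρ i))
    have hsgn : ((Equiv.Perm.sign σ : ℤ) : ℝ) * ((Equiv.Perm.sign (Equiv.mulRight σ ρ) : ℤ) : ℝ)
        = ((Equiv.Perm.sign ρ : ℤ) : ℝ) := by
      have hcases : (Equiv.Perm.sign σ : ℤ) = 1 ∨ (Equiv.Perm.sign σ : ℤ) = -1 :=
        Int.isUnit_iff.mp (Equiv.Perm.sign σ).isUnit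
      simp only [Equiv.coe_mulRight, map_mul]
      push_cast
      rcases hcases with h | h <;> rw [h] <;> ring
    rw [h1, hsgn]
  calc (∑ σ : Equiv.Perm (Fin n), ∑ τ : Equiv.Perm (Fin n),
        ((Equiv.Perm.sign σ : ℤ) : ℝ) * ((Equiv.Perm.sign τ : ℤ) : ℝ) * ∏ j, M (σ j) (τ j))
      = ∑ _σ : Equiv.Perm (Fin n), M.det := Finset.sum_congr rfl fun σ _ => inner σ
    _ = (Fintype.card (Equiv.Perm (Fin n)) : ℝ) * M.det := by
        rw [Finset.sum_const, Finset.card_univ, nsmul_eq_mul]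
    _ = n.factorial * M.det := by rw [Fintype.card_perm, Fintype.card_fin]

lemma det_M {n : ℕ} (b : ℝ) (x : Fin n → ℝ) :
    (Matrix.of fun k l : Fin n => b ^ (l : ℕ) * (x k ^ ((l : ℕ) + 1) * Real.exp (b ^ 2 * x k))).det
      = b ^ (n * (n - 1) / 2) * ((∏ k, x k * Real.exp (b ^ 2 * x k))
          * ∏ j, ∏ k ∈ Finset.Ioi j, (x k - x j)) := by
  have h2 : ∏ l : Fin n, b ^ (l : ℕ) = b ^ (n * (n - 1) / 2) := by
    rw [Finset.prod_pow_eq_pow_sum]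
    congr 1
    rw [Fin.sum_univ_eq_sum_range (fun i => i) n]
    exact Finset.sum_range_id n
  calc (Matrix.of fun k l : Fin n =>
          b ^ (l : ℕ) * (x k ^ ((l : ℕ) + 1) * Real.exp (b ^ 2 * x k))).det
      = (Matrix.of fun k l : Fin n => (fun l : Fin n => b ^ (l : ℕ)) l *
          (Matrix.of fun k l : Fin n =>
            (fun k : Fin n => x k * Real.exp (b ^ 2 * x k)) k * Matrix.vandermonde x k l)
              k l).det := by
        congr 1
        ext k l
        simp only [Matrix.of_apply, Matrix.vandermonde_apply]
        ring
    _ = (∏ l : Fin n, b ^ (l : ℕ)) * (Matrix.of fun k l : Fin n =>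
          (fun k : Fin n => x k * Real.exp (b ^ 2 * x k)) k * Matrix.vandermonde x k l).det :=
        Matrix.det_mul_row _ _
    _ = (∏ l : Fin n, b ^ (l : ℕ)) * ((∏ k, x k * Real.exp (b ^ 2 * x k))
          * (Matrix.vandermonde x).det) := by rw [Matrix.det_mul_column]
    _ = b ^ (n * (n - 1) / 2) * ((∏ k, x k * Real.exp (b ^ 2 * x k))
          * ∏ j, ∏ k ∈ Finset.Ioi j, (x k - x j)) := by
        rw [h2, Matrix.det_vandermonde]

/-- Let `n ≥ 1`, `b > 0`, and `x_1,…,x_n > 0` pairwise distinct.  Then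
`∫_{(0,∞)^n} det[e^(−y_j/x_k)] · det[y_j^((k−1)/2) I_(k−1)(2b√y_j)] dy
  = n! b^(n(n−1)/2) (∏_k x_k e^(b²x_k)) Δ_n(x)`. -/
theorem integral_det_exp_mul_det_besselI (n : ℕ) (hn : 1 ≤ n) (b : ℝ) (hb : 0 < b)
    (x : Fin n → ℝ) (hx : ∀ k, 0 < x k) (hdist : Function.Injective x) :
    (∫ y in {y : Fin n → ℝ | ∀ j, 0 < y j},
        (Matrix.of fun j k : Fin n => Real.exp (-(y j / x k))).det *
        (Matrix.of fun j k : Fin n =>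
          (Real.sqrt (y j)) ^ (k : ℕ) * besselI k (2 * b * Real.sqrt (y j))).det)
      = (n.factorial : ℝ) * b ^ (n * (n - 1) / 2) *
        (∏ k, x k * Real.exp (b ^ 2 * x k)) * (∏ j, ∏ k ∈ Finset.Ioi j, (x k - x j)) := by
  classical
  have hSeq : {y : Fin n → ℝ | ∀ j, 0 < y j} = Set.univ.pi fun _ : Fin n => Ioi (0:ℝ) := by
    ext y
    simp [Set.mem_pi]
  have hSmeas : MeasurableSet {y : Fin n → ℝ | ∀ j, 0 < y j} := by
    rw [hSeq]
    exact MeasurableSet.univ_pi fun _ => measurableSet_Ioi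
  -- coordinate functions
  set f : Fin n → ℝ → ℝ := fun k t => Real.exp (-(t / x k)) with hf
  set g : Fin n → ℝ → ℝ :=
    fun l t => Real.sqrt t ^ (l : ℕ) * besselI (l : ℕ) (2 * b * Real.sqrt t) with hg
  set M : Matrix (Fin n) (Fin n) ℝ :=
    Matrix.of fun k l : Fin n => b ^ (l : ℕ) * (x k ^ ((l : ℕ) + 1) * Real.exp (b ^ 2 * x k))
    with hM
  -- single coordinate integrals
  have hkey : ∀ k l : Fin n,
      Integrable ((Ioi (0:ℝ)).indicator fun t => f k t * g l t) volume ∧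
        ∫ t, (Ioi (0:ℝ)).indicator (fun t => f k t * g l t) t = M k l := by
    intro k l
    have h := besselI_integral (x := x k) hb (hx k) (l : ℕ)
    constructor
    · rw [integrable_indicator_iff measurableSet_Ioi]
      exact h.1
    · rw [integral_indicator measurableSet_Ioi]
      exact h.2
  -- indicator of product set
  have hprod_ind : ∀ (F : Fin n → ℝ → ℝ),
      ({y : Fin n → ℝ | ∀ j, 0 < y j}).indicator (fun y => ∏ j, F j (y j))
        = fun y => ∏ j, ((Ioi (0:ℝ)).indicator (F j)) (y j) := by
    intro F
    funext y
    rw [hSeq]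
    by_cases hy : y ∈ Set.univ.pi fun _ : Fin n => Ioi (0:ℝ)
    · rw [Set.indicator_of_mem hy]
      exact Finset.prod_congr rfl fun j _ =>
        (Set.indicator_of_mem (hy j (Set.mem_univ j)) _).symm
    · rw [Set.indicator_of_notMem hy]
      obtain ⟨j, hj⟩ : ∃ j, y j ∉ Ioi (0:ℝ) := by simpa [Set.mem_pi] using hy
      exact (Finset.prod_eq_zero (Finset.mem_univ j) (Set.indicator_of_notMem hj _)).symm
  -- pointwise determinant expansion
  have hdet : ∀ y : Fin n → ℝ,
      (Matrix.of fun j k : Fin n => Real.exp (-(y j / x k))).det *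
        (Matrix.of fun j k : Fin n =>
          (Real.sqrt (y j)) ^ (k : ℕ) * besselI k (2 * b * Real.sqrt (y j))).det
      = ∑ p : Equiv.Perm (Fin n) × Equiv.Perm (Fin n),
          (((Equiv.Perm.sign p.1 : ℤ) : ℝ) * ((Equiv.Perm.sign p.2 : ℤ) : ℝ)) *
            ∏ j, (f (p.1 j) (y j) * g (p.2 j) (y j)) := by
    intro y
    have e1 : (Matrix.of fun j k : Fin n => Real.exp (-(y j / x k))).det
        = ∑ σ : Equiv.Perm (Fin n), ((Equiv.Perm.sign σ : ℤ) : ℝ) * ∏ j, f (σ j) (y j) :=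
      det_expand f y
    have e2 : (Matrix.of fun j k : Fin n =>
          (Real.sqrt (y j)) ^ (k : ℕ) * besselI k (2 * b * Real.sqrt (y j))).det
        = ∑ τ : Equiv.Perm (Fin n), ((Equiv.Perm.sign τ : ℤ) : ℝ) * ∏ j, g (τ j) (y j) :=
      det_expand g y
    rw [e1, e2, Finset.sum_mul_sum, ← Finset.univ_product_univ, Finset.sum_product]
    refine Finset.sum_congr rfl fun σ _ => Finset.sum_congr rfl fun τ _ => ?_
    have hp : ∏ j, (f (σ j) (y j) * g (τ j) (y j))
        = (∏ j, f (σ j) (y j)) * ∏ j, g (τ j) (y j) := Finset.prod_mul_distrib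
    rw [hp]
    ring
  -- per-term integrability
  have hterm_int : ∀ p : Equiv.Perm (Fin n) × Equiv.Perm (Fin n),
      Integrable (fun y : Fin n → ℝ => ∏ j, (f (p.1 j) (y j) * g (p.2 j) (y j)))
        (volume.restrict {y : Fin n → ℝ | ∀ j, 0 < y j}) := by
    intro p
    refine (integrable_indicator_iff hSmeas).mp ?_
    rw [hprod_ind (fun j t => f (p.1 j) t * g (p.2 j) t)]
    exact MeasureTheory.Integrable.fintype_prod
      (f := fun j t => ((Ioi (0:ℝ)).indicator fun s => f (p.1 j) s * g (p.2 j) s) t)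
      fun j => (hkey (p.1 j) (p.2 j)).1
  -- per-term value
  have hterm_val : ∀ p : Equiv.Perm (Fin n) × Equiv.Perm (Fin n),
      ∫ y in {y : Fin n → ℝ | ∀ j, 0 < y j}, ∏ j, (f (p.1 j) (y j) * g (p.2 j) (y j))
        = ∏ j, M (p.1 j) (p.2 j) := by
    intro p
    rw [← integral_indicator hSmeas, hprod_ind (fun j t => f (p.1 j) t * g (p.2 j) t)]
    rw [MeasureTheory.integral_fintype_prod_volume_eq_prod (ι := Fin n)
      (f := fun j t => ((Ioi (0:ℝ)).indicator fun s => f (p.1 j) s * g (p.2 j) s) t)]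
    exact Finset.prod_congr rfl fun j _ => (hkey (p.1 j) (p.2 j)).2
  calc (∫ y in {y : Fin n → ℝ | ∀ j, 0 < y j},
        (Matrix.of fun j k : Fin n => Real.exp (-(y j / x k))).det *
        (Matrix.of fun j k : Fin n =>
          (Real.sqrt (y j)) ^ (k : ℕ) * besselI k (2 * b * Real.sqrt (y j))).det)
      = ∫ y in {y : Fin n → ℝ | ∀ j, 0 < y j},
          ∑ p : Equiv.Perm (Fin n) × Equiv.Perm (Fin n),
            (((Equiv.Perm.sign p.1 : ℤ) : ℝ) * ((Equiv.Perm.sign p.2 : ℤ) : ℝ)) *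
              ∏ j, (f (p.1 j) (y j) * g (p.2 j) (y j)) :=
        setIntegral_congr_fun hSmeas fun y _ => hdet y
    _ = ∑ p : Equiv.Perm (Fin n) × Equiv.Perm (Fin n),
          ∫ y in {y : Fin n → ℝ | ∀ j, 0 < y j},
            (((Equiv.Perm.sign p.1 : ℤ) : ℝ) * ((Equiv.Perm.sign p.2 : ℤ) : ℝ)) *
              ∏ j, (f (p.1 j) (y j) * g (p.2 j) (y j)) :=
        integral_finset_sum Finset.univ fun p _ => (hterm_int p).const_mul _
    _ = ∑ p : Equiv.Perm (Fin n) × Equiv.Perm (Fin n),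
          (((Equiv.Perm.sign p.1 : ℤ) : ℝ) * ((Equiv.Perm.sign p.2 : ℤ) : ℝ)) *
            ∏ j, M (p.1 j) (p.2 j) := by
        refine Finset.sum_congr rfl fun p _ => ?_
        rw [integral_const_mul, hterm_val p]
    _ = n.factorial * M.det := perm_pair_sum M
    _ = (n.factorial : ℝ) * b ^ (n * (n - 1) / 2) *
        (∏ k, x k * Real.exp (b ^ 2 * x k)) * (∏ j, ∏ k ∈ Finset.Ioi j, (x k - x j)) := by
        rw [hM, det_M b x]
        ring
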